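/- Let L and L' be rational linear subspaces of ℝⁿ that are mutually pure, i.e., L(ℤ) + L'(ℤ) is a pure subgroup of ℤⁿ, where L(ℤ) = L ∩ ℤⁿ. Let m ∈ ℤⁿ. If L ∩ (L' + m) is nonempty, then it contains an integer point. -/

import Mathlib

/-- The canonical embedding of the integer lattice into `ℝⁿ`, as a homomorphism. -/
def intCastHom (n : ℕ) : (Fin n → ℤ) →+ (Fin n → ℝ) where
  toFun m := fun i => (m i : ℝ)
  map_zero' := by funext i; simp
  map_add' x y := by funext i; push_cast; simp

/-- The subgroup of integer points of a subspace `L ⊆ ℝⁿ`. -/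
def latticePoints {n : ℕ} (L : Submodule ℝ (Fin n → ℝ)) : AddSubgroup (Fin n → ℤ) :=
  L.toAddSubgroup.comap (intCastHom n)

/-- A subspace is rational if it is spanned by its integer points. -/
def IsRationalSubspace {n : ℕ} (L : Submodule ℝ (Fin n → ℝ)) : Prop :=
  L = Submodule.span ℝ (intCastHom n '' (latticePoints L : Set (Fin n → ℤ)))

/-- Old Mathlib `AddMonoid.IsTorsionFree`: no nonzero element has finite additive order. -/
def AddMonoid.IsTorsionFree (G : Type*) [AddMonoid G] : Prop :=
  ∀ g : G, g ≠ 0 → ¬IsOfFinAddOrder g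

/-- coordinatewise cast `ℤⁿ → ℚⁿ`. -/
def ratCastHom (n : ℕ) : (Fin n → ℤ) →+ (Fin n → ℚ) where
  toFun m := fun i => (m i : ℚ)
  map_zero' := by funext i; simp
  map_add' x y := by funext i; push_cast; simp

lemma ratCastHom_inj (n : ℕ) : Function.Injective (ratCastHom n) := by
  intro a b h
  funext i
  have := congrFun h i
  simp only [ratCastHom, AddMonoidHom.coe_mk, ZeroHom.coe_mk] at this
  exact_mod_cast this

/-- If an integer vector is in the real span of the image of a subgroup `S ≤ ℤⁿ`,
then some positive multiple of it lies in `S`. -/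
lemma exists_nsmul_mem (n : ℕ) (S : AddSubgroup (Fin n → ℤ)) (m : Fin n → ℤ)
    (hm : (intCastHom n m : Fin n → ℝ) ∈
      Submodule.span ℝ (intCastHom n '' (S : Set (Fin n → ℤ)))) :
    ∃ k : ℕ, 0 < k ∧ k • m ∈ S := by
  -- Step 1: the rational vector is in the rational span.
  have hQ : (ratCastHom n m : Fin n → ℚ) ∈
      Submodule.span ℚ (ratCastHom n '' (S : Set (Fin n → ℤ))) := by
    by_contra hnot
    set W := Submodule.span ℚ (ratCastHom n '' (S : Set (Fin n → ℤ))) with hW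
    have hq0 : W.mkQ (ratCastHom n m) ≠ 0 := by
      simpa [Submodule.Quotient.mk_eq_zero] using hnot
    obtain ⟨φ', hφ'⟩ : ∃ φ' : Module.Dual ℚ ((Fin n → ℚ) ⧸ W),
        φ' (W.mkQ (ratCastHom n m)) ≠ 0 := by
      by_contra h
      push_neg at h
      exact hq0 ((Module.forall_dual_apply_eq_zero_iff ℚ _).mp h)
    set φ : (Fin n → ℚ) →ₗ[ℚ] ℚ := φ'.comp W.mkQ with hφdef
    have hφS : ∀ z ∈ S, φ (ratCastHom n z) = 0 := by
      intro z hz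
      have : (ratCastHom n z : Fin n → ℚ) ∈ W :=
        Submodule.subset_span ⟨z, hz, rfl⟩
      simp [hφdef, (Submodule.Quotient.mk_eq_zero W).mpr this]
    set c : Fin n → ℚ := fun i => φ (fun j => if i = j then (1 : ℚ) else 0) with hc
    -- real linear functional with the same coefficients
    set Ψ : (Fin n → ℝ) →ₗ[ℝ] ℝ :=
      { toFun := fun x => ∑ i, (c i : ℝ) * x i
        map_add' := by
          intro x y
          simp [mul_add, Finset.sum_add_distrib]
        map_smul' := by
          intro r x
          simp only [Pi.smul_apply, smul_eq_mul, RingHom.id_apply, Finset.mul_sum]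
          exact Finset.sum_congr rfl fun i _ => by ring } with hΨ
    have key : ∀ z : Fin n → ℤ, Ψ (intCastHom n z) = ((φ (ratCastHom n z) : ℚ) : ℝ) := by
      intro z
      rw [LinearMap.pi_apply_eq_sum_univ φ (ratCastHom n z)]
      push_cast
      simp only [hΨ, LinearMap.coe_mk, AddHom.coe_mk, intCastHom, ratCastHom,
        AddMonoidHom.coe_mk, ZeroHom.coe_mk, smul_eq_mul]
      push_cast
      refine Finset.sum_congr rfl fun i _ => ?_
      simp only [hc]
      ring
    have hΨspan : Submodule.span ℝ (intCastHom n '' (S : Set (Fin n → ℤ))) ≤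
        LinearMap.ker Ψ := by
      rw [Submodule.span_le]
      rintro _ ⟨z, hz, rfl⟩
      simp only [SetLike.mem_coe, LinearMap.mem_ker]
      rw [key z, hφS z hz]
      simp
    have : Ψ (intCastHom n m) = 0 := hΨspan hm
    rw [key m] at this
    exact_mod_cast hφ' (by exact_mod_cast this)
  -- Step 2: clear denominators.
  rw [Submodule.mem_span_set'] at hQ
  obtain ⟨k, f, x, hsum⟩ := hQ
  have hx : ∀ i, ∃ s ∈ S, ratCastHom n s = (x i : Fin n → ℚ) := fun i => (x i).2
  choose s hsS hsx using hx
  set d : ℕ := ∏ i, (f i).den with hd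
  have hdpos : 0 < d := Finset.prod_pos fun i _ => (f i).pos
  set z : Fin k → ℤ := fun i => (f i).num * ∏ j ∈ Finset.univ.erase i, ((f j).den : ℤ) with hz
  have hzf : ∀ i, ((z i : ℤ) : ℚ) = (d : ℚ) * f i := by
    intro i
    have hsplit : (d : ℚ) = ((f i).den : ℚ) * ∏ j ∈ Finset.univ.erase i, ((f j).den : ℚ) := by
      rw [hd]
      push_cast
      exact (Finset.mul_prod_erase Finset.univ (fun j => ((f j).den : ℚ))
        (Finset.mem_univ i)).symm
    have hq : ((f i).den : ℚ) * f i = ((f i).num : ℚ) := by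
      have h := Rat.num_div_den (f i)
      have hden : ((f i).den : ℚ) ≠ 0 := Nat.cast_ne_zero.mpr (f i).den_nz
      rw [div_eq_iff hden] at h
      rw [h]
      ring
    rw [hsplit, hz]
    push_cast
    linear_combination (-(∏ j ∈ Finset.univ.erase i, ((f j).den : ℚ))) * hq
  have hmain : ratCastHom n (d • m) = ratCastHom n (∑ i, z i • s i) := by
    rw [map_nsmul, map_sum, ← Nat.cast_smul_eq_nsmul ℚ, ← hsum, Finset.smul_sum]
    refine Finset.sum_congr rfl fun i _ => ?_
    rw [map_zsmul, ← Int.cast_smul_eq_zsmul ℚ, hsx i, smul_smul, ← hzf i]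
  have hdm : d • m = ∑ i, z i • s i := ratCastHom_inj n hmain
  refine ⟨d, hdpos, ?_⟩
  rw [hdm]
  exact AddSubgroup.sum_mem S fun i _ => AddSubgroup.zsmul_mem S (hsS i) (z i)

theorem integer_point_of_mutually_pure
    (n : ℕ) (L L' : Submodule ℝ (Fin n → ℝ))
    (hL : IsRationalSubspace L) (hL' : IsRationalSubspace L')
    (hpure : AddMonoid.IsTorsionFree
      ((Fin n → ℤ) ⧸ (latticePoints L ⊔ latticePoints L')))
    (m : Fin n → ℤ)
    (hne : ∃ v : Fin n → ℝ, v ∈ L ∧ v - intCastHom n m ∈ L') :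
    ∃ z : Fin n → ℤ, (intCastHom n z : Fin n → ℝ) ∈ L ∧
      intCastHom n z - intCastHom n m ∈ L' := by
  obtain ⟨v, hv, hv'⟩ := hne
  set S := latticePoints L ⊔ latticePoints L' with hS
  set T := Submodule.span ℝ (intCastHom n '' (S : Set (Fin n → ℤ))) with hT
  have hLT : L ≤ T := by
    rw [hL]
    apply Submodule.span_mono
    exact Set.image_mono (SetLike.coe_subset_coe.mpr le_sup_left)
  have hL'T : L' ≤ T := by
    rw [hL']
    apply Submodule.span_mono
    exact Set.image_mono (SetLike.coe_subset_coe.mpr le_sup_right)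
  have hmT : (intCastHom n m : Fin n → ℝ) ∈ T := by
    have heq : (intCastHom n m : Fin n → ℝ) = v - (v - intCastHom n m) := by ring
    rw [heq]
    exact sub_mem (hLT hv) (hL'T hv')
  obtain ⟨k, hkpos, hkm⟩ := exists_nsmul_mem n S m hmT
  -- purity: m ∈ S
  have hmS : m ∈ S := by
    by_contra hmS
    have hne0 : (QuotientAddGroup.mk m : (Fin n → ℤ) ⧸ S) ≠ 0 := by
      rwa [ne_eq, QuotientAddGroup.eq_zero_iff]
    refine hpure _ hne0 ?_
    rw [isOfFinAddOrder_iff_nsmul_eq_zero]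
    refine ⟨k, hkpos, ?_⟩
    have hmk : (k • (QuotientAddGroup.mk m : (Fin n → ℤ) ⧸ S)) =
        QuotientAddGroup.mk (k • m) :=
      ((QuotientAddGroup.mk' S).map_nsmul k m).symm
    rw [hmk, QuotientAddGroup.eq_zero_iff]
    exact hkm
  rw [hS, AddSubgroup.mem_sup] at hmS
  obtain ⟨a, ha, b, hb, hab⟩ := hmS
  refine ⟨a, ha, ?_⟩
  have : (intCastHom n a : Fin n → ℝ) - intCastHom n m = -(intCastHom n b) := by
    rw [← hab]
    simp [map_add]
  rw [this]
  exact neg_mem hb
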